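/- arXiv:0811.4033 — 5 statements merged into one kernel-verified Lean document; each statement's English description precedes it below -/
import Mathlib

section
/- Let A and B be circulant l×l matrices over F_q with polynomials a(t), b(t). Then the ml×ml block matrix formed as the product of the ml×l block column [A; A; …; A] (m copies) with the l×ml block row [B^T, B^T, …, B^T] (m copies) is a circulant ml×ml matrix whose corresponding polynomial is a(t)·â_rev(t)·Σ_{i=0}^{m−1} t^{il} mod (t^{ml}−1), where â_rev denotes b̂(t), the polynomial of B^T. -/
open Polynomial Matrix

noncomputable def circOf {F : Type*} [Semiring F] {l : ℕ} (a : Fin l → F) :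
    Matrix (Fin l) (Fin l) F :=
  Matrix.of fun i j => a (j - i)

noncomputable def polyOf {F : Type*} [Semiring F] {l : ℕ} (a : Fin l → F) : Polynomial F :=
  ∑ i : Fin l, Polynomial.C (a i) * Polynomial.X ^ (i : ℕ)

noncomputable def hatPoly {F : Type*} [Semiring F] (l : ℕ) (p : Polynomial F) : Polynomial F :=
  ∑ j ∈ Finset.range l, Polynomial.C (p.coeff j) * Polynomial.X ^ ((l - j) % l)


lemma modNat_sub {m l : ℕ} (hm : 0 < m) (hl : 0 < l) (i j : Fin (m*l)) :
    (j - i).modNat = j.modNat - i.modNat := by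
  apply Fin.ext
  simp only [Fin.coe_modNat, Fin.sub_def]
  rw [Nat.mod_mod_of_dvd _ ⟨m, mul_comm m l⟩]
  obtain ⟨qj, rj, hrj, hj⟩ : ∃ q r, r < l ∧ (j:ℕ) = l*q + r :=
    ⟨(j:ℕ)/l, (j:ℕ)%l, Nat.mod_lt _ hl, (Nat.div_add_mod _ _).symm⟩
  obtain ⟨qi, ri, hri, hi⟩ : ∃ q r, r < l ∧ (i:ℕ) = l*q + r :=
    ⟨(i:ℕ)/l, (i:ℕ)%l, Nat.mod_lt _ hl, (Nat.div_add_mod _ _).symm⟩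
  have hile : l*qi + ri ≤ m*l := by rw [← hi]; exact i.isLt.le
  have hqi : qi + 1 ≤ m := by
    by_contra h
    push_neg at h
    have : m * l ≤ l * qi := by calc m*l ≤ qi*l := Nat.mul_le_mul_right _ (by omega)
                                    _ = l*qi := mul_comm _ _
    omega
  obtain ⟨m', rfl⟩ : ∃ m', m = qi + 1 + m' := ⟨m - qi - 1, by omega⟩
  rw [hi, hj, Nat.mul_add_mod, Nat.mod_eq_of_lt hri]
  have key : (qi + 1 + m')*l - (l*qi+ri) + (l*qj+rj) = l*(m' + qj) + (l - ri + rj) := by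
    zify [hile, hri.le]
    ring
  rw [key, Nat.mul_add_mod, Nat.mul_add_mod, Nat.mod_eq_of_lt hrj]


lemma polyOf_coeff {F : Type*} [Semiring F] {l : ℕ} (a : Fin l → F) (j : Fin l) :
    (polyOf a).coeff (j : ℕ) = a j := by
  unfold polyOf
  rw [Polynomial.finset_sum_coeff]
  rw [Finset.sum_eq_single j]
  · simp [coeff_C_mul, coeff_X_pow]
  · intro i _ hij
    simp only [coeff_C_mul, coeff_X_pow]
    rw [if_neg (by simpa [Fin.val_eq_val] using (Ne.symm hij)), mul_zero]
  · simp

lemma hatPoly_polyOf {F : Type*} [Semiring F] {l : ℕ} (b : Fin l → F) :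
    hatPoly l (polyOf b) = ∑ j : Fin l, Polynomial.C (b j) * Polynomial.X ^ ((l - (j:ℕ)) % l) := by
  unfold hatPoly
  rw [← Fin.sum_univ_eq_sum_range (fun j => Polynomial.C ((polyOf b).coeff j) * Polynomial.X ^ ((l - j) % l))]
  exact Finset.sum_congr rfl fun j _ => by rw [polyOf_coeff]

-- geometric sum invariance
lemma geom_fix {R : Type*} [CommRing R] {m : ℕ} (y : R) (hy : y ^ m = 1) :
    y * ∑ s ∈ Finset.range m, y ^ s = ∑ s ∈ Finset.range m, y ^ s := by
  rw [Finset.mul_sum]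
  have e : ∀ s, y * y ^ s = y ^ (s+1) := fun s => by rw [pow_succ, mul_comm]
  simp only [e]
  have h1 : ∑ s ∈ Finset.range (m+1), y^s = (∑ s ∈ Finset.range m, y^(s+1)) + y^0 :=
    Finset.sum_range_succ' _ m
  have h2 : ∑ s ∈ Finset.range (m+1), y^s = (∑ s ∈ Finset.range m, y^s) + y^m :=
    Finset.sum_range_succ _ m
  have := h1.symm.trans h2
  rw [pow_zero] at this
  linear_combination this + hy

lemma geom_fix_pow {R : Type*} [CommRing R] {m : ℕ} (y : R) (hy : y ^ m = 1) (t : ℕ) :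
    y ^ t * ∑ s ∈ Finset.range m, y ^ s = ∑ s ∈ Finset.range m, y ^ s := by
  induction t with
  | zero => simp
  | succ t ih => rw [pow_succ, mul_comm (y^t) y, mul_assoc, ih, geom_fix y hy]

lemma fin_exp {l : ℕ} [NeZero l] (i j : Fin l) :
    ((i:ℕ) + (l - (j:ℕ)) % l) % l = ((i - j : Fin l) : ℕ) := by
  rw [Fin.sub_def]
  conv_lhs => rw [Nat.add_mod, Nat.mod_mod_of_dvd _ dvd_rfl, ← Nat.add_mod]
  rw [Nat.add_comm]

lemma main_dvd {F : Type*} [Field F] (m l : ℕ) (hm : 0 < m) (hl : 0 < l) (a b : Fin l → F) :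
    ((X : Polynomial F) ^ (m * l) - 1) ∣
      (polyOf a * hatPoly l (polyOf b) * (∑ i ∈ Finset.range m, (X : Polynomial F) ^ (i * l))
        - polyOf (fun d : Fin (m*l) => ∑ k : Fin l, a k * b (k - d.modNat))) := by
  haveI : NeZero l := ⟨hl.ne'⟩
  haveI : NeZero (m*l) := ⟨Nat.mul_ne_zero hm.ne' hl.ne'⟩
  set g : Polynomial F := X ^ (m*l) - 1 with hg
  set I : Ideal (Polynomial F) := Ideal.span {g} with hI
  rw [← Ideal.mem_span_singleton, ← hI]
  rw [← Ideal.Quotient.eq]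
  set π : Polynomial F →+* (Polynomial F ⧸ I) := Ideal.Quotient.mk I with hπ
  set x : Polynomial F ⧸ I := π X with hxdef
  have hx : x ^ (m*l) = 1 := by
    have h0 : π g = 0 := Ideal.Quotient.eq_zero_iff_mem.2 (Ideal.subset_span rfl)
    rw [hg, _root_.map_sub, map_pow, π.map_one, sub_eq_zero] at h0
    exact h0
  set y : Polynomial F ⧸ I := x ^ l with hydef
  have hy : y ^ m = 1 := by rw [hydef, ← pow_mul, mul_comm, hx]
  set G : Polynomial F ⧸ I := ∑ s ∈ Finset.range m, y ^ s with hG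
  have key : ∀ e : ℕ, x ^ e * G = x ^ (e % l) * G := by
    intro e
    conv_lhs => rw [← Nat.div_add_mod e l]
    rw [pow_add, pow_mul, ← hydef, mul_right_comm, geom_fix_pow y hy, mul_comm G]
  -- push π through
  rw [hatPoly_polyOf]
  simp only [polyOf, _root_.map_sub, _root_.map_mul, map_sum, map_pow]
  rw [← hxdef]
  have hgeom : ∑ s ∈ Finset.range m, x ^ (s*l) = G := by
    rw [hG]
    exact Finset.sum_congr rfl fun s _ => by rw [mul_comm, pow_mul, ← hydef]
  rw [hgeom]
  have hmodf : ∀ (q : Fin m) (r : Fin l), (finProdFinEquiv (q, r)).modNat = r := by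
    intro q r
    apply Fin.ext
    simp only [Fin.coe_modNat, finProdFinEquiv_apply_val]
    rw [Nat.add_mul_mod_self_left, Nat.mod_eq_of_lt r.isLt]
  have hA : ∀ (i j : Fin l),
      π (C (a i)) * x ^ (i:ℕ) * (π (C (b j)) * x ^ ((l - (j:ℕ)) % l)) * G
        = π (C (a i)) * π (C (b j)) * (x ^ ((i - j : Fin l) : ℕ) * G) := by
    intro i j
    rw [← fin_exp i j, ← key ((i:ℕ) + (l - (j:ℕ)) % l)]
    ring
  calc ((∑ i : Fin l, π (C (a i)) * x ^ (i:ℕ)) *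
          ∑ j : Fin l, π (C (b j)) * x ^ ((l - (j:ℕ)) % l)) * G
      = ∑ i : Fin l, ∑ j : Fin l,
          π (C (a i)) * x ^ (i:ℕ) * (π (C (b j)) * x ^ ((l - (j:ℕ)) % l)) * G := by
        rw [Finset.sum_mul_sum, Finset.sum_mul]
        exact Finset.sum_congr rfl fun i _ => by rw [Finset.sum_mul]
    _ = ∑ i : Fin l, ∑ j : Fin l,
          π (C (a i)) * π (C (b j)) * (x ^ ((i - j : Fin l) : ℕ) * G) :=
        Finset.sum_congr rfl fun i _ => Finset.sum_congr rfl fun j _ => hA i j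
    _ = ∑ k : Fin l, ∑ r : Fin l,
          π (C (a k)) * π (C (b (k - r))) * (x ^ (r : ℕ) * G) := by
        refine Finset.sum_congr rfl fun k _ => ?_
        rw [← Equiv.sum_comp (Equiv.subLeft k)
          (fun r : Fin l => π (C (a k)) * π (C (b (k - r))) * (x ^ (r : ℕ) * G))]
        exact Finset.sum_congr rfl fun j _ => by rw [Equiv.subLeft_apply, sub_sub_cancel]
    _ = ∑ r : Fin l, ∑ k : Fin l,
          π (C (a k)) * π (C (b (k - r))) * (x ^ (r : ℕ) * G) := Finset.sum_comm
    _ = ∑ d : Fin (m*l),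
          (∑ k : Fin l, π (C (a k)) * π (C (b (k - d.modNat)))) * x ^ ((d : Fin (m*l)) : ℕ) := by
        symm
        rw [← Equiv.sum_comp finProdFinEquiv
          (fun d : Fin (m*l) =>
            (∑ k : Fin l, π (C (a k)) * π (C (b (k - d.modNat)))) * x ^ ((d : Fin (m*l)) : ℕ)),
          Fintype.sum_prod_type, Finset.sum_comm]
        refine Finset.sum_congr rfl fun r _ => ?_
        have step : ∀ q : Fin m,
            (∑ k : Fin l, π (C (a k)) * π (C (b (k - (finProdFinEquiv (q, r)).modNat))))
              * x ^ ((finProdFinEquiv (q, r) : Fin (m*l)) : ℕ)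
            = ((∑ k : Fin l, π (C (a k)) * π (C (b (k - r)))) * x ^ (r:ℕ)) * y ^ (q:ℕ) := by
          intro q
          rw [hmodf q r, finProdFinEquiv_apply_val, pow_add, pow_mul, ← hydef]
          ring
        rw [Finset.sum_congr rfl fun q _ => step q, ← Finset.mul_sum,
          Fin.sum_univ_eq_sum_range (fun s => y ^ s) m, ← hG]
        simp only [Finset.sum_mul]
        exact Finset.sum_congr rfl fun k _ => by ring

/-- the `ml×l` block column `[A; …; A]` times the `l×ml` block row
`[Bᵀ, …, Bᵀ]` is a circulant `ml×ml` matrix with polynomial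
`a(t)·b(t)·∑_{i<m} t^{il} mod (t^{ml}−1)`. -/
theorem stmt3 (F : Type*) [Field F] [Fintype F] (m l : ℕ) (hm : 0 < m) (hl : 0 < l)
    (a b : Fin l → F) :
    ∃ c : Fin (m * l) → F,
      (Matrix.of fun (i : Fin (m * l)) (j : Fin l) => circOf a i.modNat j) *
          (Matrix.of fun (i : Fin l) (j : Fin (m * l)) => (circOf b)ᵀ i j.modNat)
        = circOf c ∧
      ((X : Polynomial F) ^ (m * l) - 1) ∣
        (polyOf a * hatPoly l (polyOf b) * (∑ i ∈ Finset.range m, (X : Polynomial F) ^ (i * l))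
          - polyOf c) := by
  
  haveI : NeZero l := ⟨hl.ne'⟩
  refine ⟨fun d => ∑ k : Fin l, a k * b (k - d.modNat), ?_, main_dvd m l hm hl a b⟩
  ext i j
  simp only [Matrix.mul_apply, Matrix.of_apply, circOf, Matrix.transpose_apply]
  rw [modNat_sub hm hl]
  rw [← Equiv.sum_comp (Equiv.addRight i.modNat) (fun k => a (k - i.modNat) * b (k - j.modNat))]
  apply Finset.sum_congr rfl
  intro k _
  simp only [Equiv.coe_addRight, add_sub_cancel_right]
  congr 1
  abel_nf
end

section
/- Let C̄ ⊆ F_q[t]^m be the submodule associated to a GQC code C with orbit lengths l_1,…,l_m, and let {g_1,…,g_m} be a POT Gröbner basis with diagonal degrees d_i = deg g_{ii}. Then every element c ∈ C̄ can be written as c = P_1(t)g_1 + ⋯ + P_m(t)g_m with P_i ∈ F_q[t], and the dimension of C over F_q equals Σ_{i=1}^m (l_i − d_i). -/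
open Polynomial

noncomputable def stdGen {F : Type*} [CommRing F] {m : ℕ} (l : Fin m → ℕ) (i : Fin m) :
    Fin m → Polynomial F :=
  fun j => if j = i then Polynomial.X ^ (l i) - 1 else 0

private lemma poly_as_sum {F : Type*} [Field F] {p : Polynomial F} {n : ℕ}
    (h : p.degree < (n : WithBot ℕ)) :
    p = ∑ a ∈ Finset.range n, C (p.coeff a) * X ^ a := by
  rcases eq_or_ne p 0 with rfl | hp
  · simp
  · have hn : p.natDegree < n := (natDegree_lt_iff_degree_lt hp).mpr h
    conv_lhs => rw [p.as_sum_range' n hn]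
    simp [Polynomial.C_mul_X_pow_eq_monomial]

set_option maxHeartbeats 1000000 in
/-- a POT Gröbner basis generates `C̄` (every element is a polynomial
combination `∑ P_i g_i`), and the `F_q`-dimension of the corresponding code
`C = π(C̄) ⊆ M = ⊕_i F_q[t]/(t^{l i}−1)` equals `∑ (l i − deg g_{ii})`. -/
theorem stmt7 (F : Type*) [Field F] [Fintype F] (m : ℕ) (l : Fin m → ℕ)
    (hl : ∀ i, 0 < l i)
    (Cbar : Submodule (Polynomial F) (Fin m → Polynomial F))
    (hX : ∀ i, stdGen l i ∈ Cbar)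
    (g : Fin m → Fin m → Polynomial F)
    (hmem : ∀ i, g i ∈ Cbar)
    (htri : ∀ i j, j < i → g i j = 0)
    (hne : ∀ i, g i i ≠ 0)
    (hdvd : ∀ i, g i i ∣ (X : Polynomial F) ^ (l i) - 1)
    (hmin : ∀ i, ∀ c ∈ Cbar, (∀ j, j < i → c j = 0) → c i ≠ 0 →
      (g i i).degree ≤ (c i).degree) :
    (∀ c ∈ Cbar, ∃ P : Fin m → Polynomial F, c = ∑ i, P i • g i) ∧
    Module.finrank F
        ((Cbar.restrictScalars F).map
          (LinearMap.pi fun i : Fin m =>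
            (Ideal.Quotient.mkₐ F (Ideal.span {(X : Polynomial F) ^ (l i) - 1})).toLinearMap.comp
              (LinearMap.proj i)))
      = ∑ i : Fin m, (l i - (g i i).natDegree) := by
  -- basic facts about `X ^ l i - 1`
  have hdegXl : ∀ i, ((X : Polynomial F) ^ (l i) - 1).degree = (l i : WithBot ℕ) := by
    intro i; simpa using degree_X_pow_sub_C (hl i) (1 : F)
  have hXlne : ∀ i, ((X : Polynomial F) ^ (l i) - 1) ≠ 0 := by
    intro i h
    have := hdegXl i
    rw [h, degree_zero] at this
    exact absurd this.symm (by simp)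
  have hnXl : ∀ i, ((X : Polynomial F) ^ (l i) - 1).natDegree = l i := by
    intro i; simpa using (natDegree_X_pow_sub_C (n := l i) (r := (1 : F)))
  have hdle : ∀ i, (g i i).natDegree ≤ l i := by
    intro i
    have := Polynomial.natDegree_le_of_dvd (hdvd i) (hXlne i)
    rwa [hnXl i] at this
  -- the key division step
  have step : ∀ (k : Fin m), ∀ c ∈ Cbar, (∀ j, j < k → c j = 0) →
      ∃ q : Polynomial F, ∀ j, j ≤ k → (c - q • g k) j = 0 := by
    intro k c hc h0
    have hD0 : g k k ≠ 0 := hne k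
    have hDmm : (g k k * C (g k k).leadingCoeff⁻¹).Monic := monic_mul_leadingCoeff_inv hD0
    refine ⟨(c k /ₘ (g k k * C (g k k).leadingCoeff⁻¹)) * C (g k k).leadingCoeff⁻¹, ?_⟩
    have hck : (c - ((c k /ₘ (g k k * C (g k k).leadingCoeff⁻¹)) * C (g k k).leadingCoeff⁻¹) • g k) k
        = c k %ₘ (g k k * C (g k k).leadingCoeff⁻¹) := by
      have h1 := Polynomial.modByMonic_add_div (c k) (g k k * C (g k k).leadingCoeff⁻¹)
      simp only [Pi.sub_apply, Pi.smul_apply, smul_eq_mul]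
      linear_combination -h1
    have hlow : ∀ j, j < k →
        (c - ((c k /ₘ (g k k * C (g k k).leadingCoeff⁻¹)) * C (g k k).leadingCoeff⁻¹) • g k) j = 0 := by
      intro j hj
      simp [h0 j hj, htri k j hj]
    have hr : c k %ₘ (g k k * C (g k k).leadingCoeff⁻¹) = 0 := by
      by_contra hr0
      have hmem' : c - ((c k /ₘ (g k k * C (g k k).leadingCoeff⁻¹)) * C (g k k).leadingCoeff⁻¹) • g k ∈ Cbar :=
        sub_mem hc (Cbar.smul_mem _ (hmem k))
      have hle := hmin k _ hmem' hlow (by rw [hck]; exact hr0)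
      rw [hck] at hle
      have hlt : (c k %ₘ (g k k * C (g k k).leadingCoeff⁻¹)).degree
          < (g k k * C (g k k).leadingCoeff⁻¹).degree := degree_modByMonic_lt _ hDmm
      rw [degree_mul_leadingCoeff_inv _ hD0] at hlt
      exact absurd hle (not_le.mpr hlt)
    intro j hj
    rcases lt_or_eq_of_le hj with h | h
    · exact hlow j h
    · rw [h, hck, hr]
  -- generation lemma
  have gen : ∀ n : ℕ, ∀ c ∈ Cbar, (∀ j : Fin m, (j : ℕ) < m - n → c j = 0) →
      ∃ P : Fin m → Polynomial F, c = ∑ i, P i • g i := by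
    intro n
    induction n with
    | zero =>
      intro c hc h0
      refine ⟨0, ?_⟩
      have hc0 : c = 0 := funext fun j => h0 j (by simpa using j.isLt)
      simp [hc0]
    | succ n ih =>
      intro c hc h0
      by_cases hmn : m - (n + 1) < m - n
      · have hk : m - (n + 1) < m := lt_of_lt_of_le hmn (Nat.sub_le m n)
        set k : Fin m := ⟨m - (n + 1), hk⟩ with hkdef
        obtain ⟨q, hq⟩ := step k c hc (fun j hj => h0 j (by rw [Fin.lt_def] at hj; exact hj))
        obtain ⟨P, hP⟩ := ih (c - q • g k) (sub_mem hc (Cbar.smul_mem q (hmem k)))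
          (fun j hj => hq j (by rw [Fin.le_def]; show (j : ℕ) ≤ m - (n + 1); omega))
        refine ⟨fun i => P i + if i = k then q else 0, ?_⟩
        have hsum : ∑ i, (P i + if i = k then q else 0) • g i
            = (∑ i, P i • g i) + q • g k := by
          simp [add_smul, Finset.sum_add_distrib, ite_smul]
        rw [hsum, ← hP]
        abel
      · exact ih c hc fun j hj => h0 j (by omega)
  -- reduction lemma
  have red : ∀ n : ℕ, ∀ c ∈ Cbar, (∀ j : Fin m, (j : ℕ) < m - n → c j = 0) →
      ∃ v : Fin m → Polynomial F,
        (∀ i, (v i).degree < ((l i - (g i i).natDegree : ℕ) : WithBot ℕ)) ∧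
        (∀ j, (X ^ (l j) - 1 : Polynomial F) ∣ (c - ∑ i, v i • g i) j) := by
    intro n
    induction n with
    | zero =>
      intro c hc h0
      have hc0 : c = 0 := funext fun j => h0 j (by simpa using j.isLt)
      refine ⟨0, fun i => by simp only [Pi.zero_apply, degree_zero]; exact bot_lt_iff_ne_bot.mpr (by simp), fun j => ?_⟩
      simp [hc0]
    | succ n ih =>
      intro c hc h0
      by_cases hmn : m - (n + 1) < m - n
      · have hk : m - (n + 1) < m := lt_of_lt_of_le hmn (Nat.sub_le m n)
        set k : Fin m := ⟨m - (n + 1), hk⟩ with hkdef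
        obtain ⟨q, hq⟩ := step k c hc (fun j hj => h0 j (by rw [Fin.lt_def] at hj; exact hj))
        obtain ⟨f, hf⟩ := hdvd k
        have hf0 : f ≠ 0 := fun h => hXlne k (by rw [hf, h, mul_zero])
        obtain ⟨u, v, huv, hvdeg⟩ : ∃ u v : Polynomial F, q = v + u * f ∧ v.degree < f.degree := by
          refine ⟨(q /ₘ (f * C f.leadingCoeff⁻¹)) * C f.leadingCoeff⁻¹,
            q %ₘ (f * C f.leadingCoeff⁻¹), ?_, ?_⟩
          · linear_combination - (Polynomial.modByMonic_add_div q (f * C f.leadingCoeff⁻¹))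
          · have := degree_modByMonic_lt q (monic_mul_leadingCoeff_inv hf0)
            rwa [degree_mul_leadingCoeff_inv _ hf0] at this
        have hnf : (g k k).natDegree + f.natDegree = l k := by
          have h2 := congrArg natDegree hf
          rw [hnXl k, natDegree_mul (hne k) hf0] at h2
          omega
        have hvdeg' : v.degree < ((l k - (g k k).natDegree : ℕ) : WithBot ℕ) := by
          have : f.natDegree = l k - (g k k).natDegree := by omega
          rwa [degree_eq_natDegree hf0, this] at hvdeg
        set c'' := c - q • g k + (u * f) • g k - u • stdGen l k with hc''def
        have mem'' : c'' ∈ Cbar := by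
          exact sub_mem (add_mem (sub_mem hc (Cbar.smul_mem _ (hmem k)))
            (Cbar.smul_mem _ (hmem k))) (Cbar.smul_mem _ (hX k))
        have h0'' : ∀ j : Fin m, (j : ℕ) < m - n → c'' j = 0 := by
          intro j hj
          have hjk : j ≤ k := by rw [Fin.le_def]; show (j : ℕ) ≤ m - (n + 1); omega
          rcases lt_or_eq_of_le hjk with hlt | heq
          · have hcj : c j = 0 := h0 j (by rw [Fin.lt_def] at hlt; exact hlt)
            simp [hc''def, htri k j hlt, stdGen, Fin.ne_of_lt hlt, hcj]
          · have hcj := hq j (le_of_eq heq)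
            simp only [Pi.sub_apply, Pi.smul_apply, smul_eq_mul] at hcj
            simp only [hc''def, Pi.sub_apply, Pi.add_apply, Pi.smul_apply, smul_eq_mul,
              stdGen, heq, eq_self_iff_true, if_true]
            rw [heq] at hcj
            linear_combination hcj - u * hf
        obtain ⟨v'', hdeg'', hdvd''⟩ := ih c'' mem'' h0''
        refine ⟨fun i => v'' i + if i = k then v else 0, ?_, ?_⟩
        · intro i
          by_cases hik : i = k
          · rw [hik]
            simp only [if_pos rfl]
            exact lt_of_le_of_lt (degree_add_le _ _) (max_lt (hdeg'' k) hvdeg')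
          · simpa [hik] using hdeg'' i
        · intro j
          have hsum : ∑ i, (v'' i + if i = k then v else 0) • g i
              = (∑ i, v'' i • g i) + v • g k := by
            simp [add_smul, Finset.sum_add_distrib, ite_smul]
          have key : c - ((∑ i, v'' i • g i) + v • g k)
              = (c'' - ∑ i, v'' i • g i) + u • stdGen l k := by
            rw [hc''def, huv, add_smul]
            abel
          rw [hsum]
          have : (c - ((∑ i, v'' i • g i) + v • g k)) j
              = (c'' - ∑ i, v'' i • g i) j + (u • stdGen l k) j := by rw [key]; rfl
          rw [this]
          refine dvd_add (hdvd'' j) ?_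
          by_cases hjk : j = k
          · subst hjk
            simp only [Pi.smul_apply, stdGen, if_pos rfl, smul_eq_mul]
            exact Dvd.dvd.mul_left dvd_rfl u
          · simp [stdGen, hjk]
      · exact ih c hc fun j hj => h0 j (by omega)
  constructor
  · intro c hc
    exact gen m c hc (fun j hj => absurd hj (by omega))
  -- dimension computation
  set φ : (Fin m → Polynomial F) →ₗ[F]
      ((i : Fin m) → Polynomial F ⧸ Ideal.span {(X : Polynomial F) ^ (l i) - 1}) :=
    LinearMap.pi fun i : Fin m =>
      (Ideal.Quotient.mkₐ F (Ideal.span {(X : Polynomial F) ^ (l i) - 1})).toLinearMap.comp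
        (LinearMap.proj i) with hφdef
  have hφap : ∀ (x : Fin m → Polynomial F) (i : Fin m),
      φ x i = Ideal.Quotient.mk (Ideal.span {(X : Polynomial F) ^ (l i) - 1}) (x i) := by
    intro x i; rfl
  have hφ0 : ∀ x : Fin m → Polynomial F,
      (∀ i, (X ^ (l i) - 1 : Polynomial F) ∣ x i) → φ x = 0 := by
    intro x hx
    funext i
    rw [hφap, Pi.zero_apply, Ideal.Quotient.eq_zero_iff_mem, Ideal.mem_span_singleton]
    exact hx i
  have hCs : ∀ (a : F) (y : Fin m → Polynomial F), Polynomial.C a • y = a • y := by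
    intro a y
    rw [← Polynomial.algebraMap_eq]
    exact algebraMap_smul _ a y
  set bFam : ((i : Fin m) × Fin (l i - (g i i).natDegree)) →
      ((i : Fin m) → Polynomial F ⧸ Ideal.span {(X : Polynomial F) ^ (l i) - 1}) :=
    fun σ => φ ((X : Polynomial F) ^ (σ.2 : ℕ) • g σ.1) with hbFam
  have hspan : (Cbar.restrictScalars F).map φ = Submodule.span F (Set.range bFam) := by
    apply le_antisymm
    · rintro y ⟨c, hc, rfl⟩
      have hc' : c ∈ Cbar := hc
      obtain ⟨v, hvd, hvdvd⟩ := red m c hc' (fun j hj => absurd hj (by omega))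
      have hsub : φ c - φ (∑ i, v i • g i) = 0 := by
        rw [← map_sub]; exact hφ0 _ hvdvd
      rw [sub_eq_zero] at hsub
      rw [hsub, map_sum]
      apply Submodule.sum_mem
      intro i _
      have hvi : v i = ∑ a ∈ Finset.range (l i - (g i i).natDegree), C ((v i).coeff a) * X ^ a :=
        poly_as_sum (hvd i)
      have hterm : φ (v i • g i)
          = ∑ a ∈ Finset.range (l i - (g i i).natDegree),
              (v i).coeff a • φ ((X : Polynomial F) ^ a • g i) := by
        conv_lhs => rw [hvi]
        rw [Finset.sum_smul, map_sum]
        refine Finset.sum_congr rfl fun a _ => ?_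
        rw [mul_smul, hCs, map_smul]
      rw [hterm]
      apply Submodule.sum_mem
      intro a ha
      apply Submodule.smul_mem
      apply Submodule.subset_span
      exact ⟨⟨i, ⟨a, Finset.mem_range.mp ha⟩⟩, rfl⟩
    · rw [Submodule.span_le]
      rintro y ⟨σ, rfl⟩
      exact Submodule.mem_map.mpr
        ⟨_, Cbar.smul_mem ((X : Polynomial F) ^ (σ.2 : ℕ)) (hmem σ.1), rfl⟩
  have hli : LinearIndependent F bFam := by
    rw [Fintype.linearIndependent_iff]
    intro coef hcoef
    set V : Fin m → Polynomial F :=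
      fun i => ∑ a : Fin (l i - (g i i).natDegree), C (coef ⟨i, a⟩) * X ^ (a : ℕ) with hVdef
    have hsum : φ (∑ i, V i • g i) = 0 := by
      rw [← hcoef, map_sum, ← Finset.univ_sigma_univ, Finset.sum_sigma]
      refine Finset.sum_congr rfl fun i _ => ?_
      rw [hVdef]
      rw [Finset.sum_smul, map_sum]
      refine Finset.sum_congr rfl fun a _ => ?_
      rw [mul_smul, hCs, map_smul]
    have hdv : ∀ j, (X ^ (l j) - 1 : Polynomial F) ∣ (∑ i, V i • g i) j := by
      intro j
      have h1 := congrFun hsum j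
      rw [hφap] at h1
      have h2 : (∑ i, V i • g i) j ∈ Ideal.span {(X : Polynomial F) ^ (l j) - 1} :=
        Ideal.Quotient.eq_zero_iff_mem.mp h1
      exact (Ideal.mem_span_singleton).mp h2
    have hVdeg : ∀ i, (V i).degree < ((l i - (g i i).natDegree : ℕ) : WithBot ℕ) := by
      intro i
      refine lt_of_le_of_lt (degree_sum_le _ _) ?_
      rw [Finset.sup_lt_iff (WithBot.bot_lt_coe _)]
      intro a _
      exact lt_of_le_of_lt (degree_C_mul_X_pow_le _ _) (by exact_mod_cast a.isLt)
    have hV0 : ∀ i, V i = 0 := by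
      have key : ∀ N : ℕ, ∀ i : Fin m, (i : ℕ) = N → V i = 0 := by
        intro N
        induction N using Nat.strong_induction_on with
        | _ N ihN =>
          intro i hi
          have hcomp : (∑ j, V j • g j) i = V i * g i i := by
            simp only [Finset.sum_apply, Pi.smul_apply, smul_eq_mul]
            rw [Finset.sum_eq_single i]
            · intro b _ hbi
              rcases lt_or_gt_of_ne hbi with hb | hb
              · rw [ihN (b : ℕ) (by rw [← hi]; exact hb) b rfl, zero_mul]
              · rw [htri b i hb, mul_zero]
            · intro h; exact absurd (Finset.mem_univ i) h
          by_contra hVi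
          have hdvi := hdv i
          rw [hcomp] at hdvi
          have hne0 : V i * g i i ≠ 0 := mul_ne_zero hVi (hne i)
          have hlt : (V i * g i i).degree < ((X : Polynomial F) ^ (l i) - 1).degree := by
            have h1 : (V i).natDegree < l i - (g i i).natDegree :=
              (natDegree_lt_iff_degree_lt hVi).mpr (hVdeg i)
            rw [degree_eq_natDegree hne0, hdegXl i, natDegree_mul hVi (hne i)]
            exact_mod_cast (by have := hdle i; omega :
              (V i).natDegree + (g i i).natDegree < l i)
          exact hne0 (Polynomial.eq_zero_of_dvd_of_degree_lt hdvi hlt)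
      intro i; exact key (i : ℕ) i rfl
    intro σ
    obtain ⟨i, a⟩ := σ
    have h3 := congrArg (fun p => Polynomial.coeff p (a : ℕ)) (hV0 i)
    simp only [hVdef, Polynomial.finset_sum_coeff, Polynomial.coeff_C_mul,
      Polynomial.coeff_X_pow, Polynomial.coeff_zero, mul_ite, mul_one, mul_zero] at h3
    simpa [Fin.val_inj, Finset.sum_ite_eq] using h3
  rw [hspan, finrank_span_eq_card hli]
  simp
end

section
/- Let {h_1,…,h_m} be the reduced rPOT Gröbner basis of C̄^⊥ (lower-triangular, h_{ii} monic dividing t^{l_i}−1, deg h_{ij} < deg h_{jj} for j < i). Define the lower-triangular polynomial matrix A = (a_{ij}) recursively by a_{ii} = (t^{l_i}−1)/h_{ii} and a_{ij} = −(1/h_{jj})·Σ_{δ=j+1}^{i} a_{iδ} h_{δj} for j < i. Then A·(h_{ij}) = diag(t^{l_1}−1, …, t^{l_m}−1), and deg a_{ij} < deg a_{ii} for all i > j. -/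
open Polynomial

open Classical in
/-- The lcm `l` of the orbit lengths `l i` for which `u i` and `v i` are both nonzero. -/
noncomputable def suppLcm {F : Type*} [Semiring F] {m : ℕ} (l : Fin m → ℕ)
    (u v : Fin m → Polynomial F) : ℕ :=
  Finset.lcm (Finset.univ.filter fun i => u i ≠ 0 ∧ v i ≠ 0) l

/-- The scalar product `⟨u,v⟩ = ∑_i u_i(t)·v_i(t)·∑_{k<l/l_i} t^{k l_i}`. -/
noncomputable def scalarProd {F : Type*} [Semiring F] {m : ℕ} (l : Fin m → ℕ)
    (u v : Fin m → Polynomial F) : Polynomial F :=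
  ∑ i : Fin m, u i * hatPoly (l i) (v i) *
    ∑ k ∈ Finset.range (suppLcm l u v / l i), Polynomial.X ^ (k * l i)

/-- The standard inner product of the codewords corresponding to the polynomial vectors
`u` and `v` (coefficients of the reductions modulo `t^{l i} − 1`). -/
noncomputable def pairing {F : Type*} [Field F] {m : ℕ} (l : Fin m → ℕ)
    (u v : Fin m → Polynomial F) : F :=
  ∑ i : Fin m, ∑ j ∈ Finset.range (l i),
    ((u i) %ₘ (Polynomial.X ^ (l i) - 1)).coeff j *
      ((v i) %ₘ (Polynomial.X ^ (l i) - 1)).coeff j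

/-- for the reduced rPOT Gröbner basis `{h_i}` (lower triangular, `h_{ii}` monic
dividing `t^{l_i}−1`, `deg h_{ij} < deg h_{jj}` for `j<i`), the matrix `A = (a_{ij})` defined
by the recursion `a_{ii} = (t^{l_i}−1)/h_{ii}`,
`a_{ij} = −(1/h_{jj})·∑_{δ=j+1}^{i} a_{iδ} h_{δj}` satisfies
`A·(h_{ij}) = diag(t^{l_1}−1,…,t^{l_m}−1)` and `deg a_{ij} < deg a_{ii}` for `i > j`. -/
theorem stmt11 (F : Type*) [Field F] [Fintype F] (m : ℕ) (l : Fin m → ℕ)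
    (hl : ∀ i, 0 < l i)
    (h a : Fin m → Fin m → Polynomial F)
    (htri : ∀ i j : Fin m, i < j → h i j = 0)
    (hmonic : ∀ i, (h i i).Monic)
    (hdvd : ∀ i, h i i ∣ (X : Polynomial F) ^ (l i) - 1)
    (hred : ∀ i j : Fin m, j < i → (h i j).degree < (h j j).degree)
    (hatri : ∀ i j : Fin m, i < j → a i j = 0)
    (hadiag : ∀ i, a i i * h i i = (X : Polynomial F) ^ (l i) - 1)
    (harec : ∀ i j : Fin m, j < i →
      a i j * h j j = -∑ δ ∈ Finset.Ioc j i, a i δ * h δ j) :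
    (∀ i j : Fin m,
      ∑ δ : Fin m, a i δ * h δ j =
        if i = j then (X : Polynomial F) ^ (l i) - 1 else 0) ∧
    (∀ i j : Fin m, j < i → (a i j).degree < (a i i).degree) := by
  classical
  have hXne : ∀ i : Fin m, (X : Polynomial F) ^ (l i) - 1 ≠ 0 := by
    intro i
    have : (X : Polynomial F) ^ (l i) - C 1 ≠ 0 := X_pow_sub_C_ne_zero (hl i) 1
    simpa using this
  have hane : ∀ i : Fin m, a i i ≠ 0 := by
    intro i hz
    apply hXne i
    rw [← hadiag i, hz, zero_mul]
  have hadegbot : ∀ i : Fin m, (a i i).degree ≠ ⊥ := fun i => by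
    simp [degree_eq_bot, hane i]
  have hhne : ∀ i : Fin m, h i i ≠ 0 := fun i => (hmonic i).ne_zero
  have hhdegbot : ∀ i : Fin m, (h i i).degree ≠ ⊥ := fun i => by
    simp [degree_eq_bot, hhne i]
  constructor
  · intro i j
    rcases lt_trichotomy i j with hij | hij | hij
    · rw [if_neg hij.ne]
      apply Finset.sum_eq_zero
      intro δ _
      rcases le_or_gt δ i with hδ | hδ
      · rw [htri δ j (lt_of_le_of_lt hδ hij), mul_zero]
      · rw [hatri i δ hδ, zero_mul]
    · subst hij
      rw [if_pos rfl]
      rw [Finset.sum_eq_single i]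
      · exact hadiag i
      · intro δ _ hδ
        rcases lt_or_gt_of_ne hδ with h1 | h1
        · rw [htri δ i h1, mul_zero]
        · rw [hatri i δ h1, zero_mul]
      · intro hc; exact absurd (Finset.mem_univ i) hc
    · rw [if_neg hij.ne']
      have hsub : ∑ δ : Fin m, a i δ * h δ j = ∑ δ ∈ Finset.Icc j i, a i δ * h δ j := by
        rw [eq_comm]
        apply Finset.sum_subset (Finset.subset_univ _)
        intro δ _ hδ
        rw [Finset.mem_Icc, not_and_or] at hδ
        rcases hδ with h1 | h1
        · rw [htri δ j (lt_of_not_ge h1), mul_zero]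
        · rw [hatri i δ (lt_of_not_ge h1), zero_mul]
      rw [hsub, ← Finset.Ioc_insert_left hij.le,
        Finset.sum_insert (by simp), harec i j hij]
      ring
  · intro i j hj0
    -- strong induction on i - j
    suffices H : ∀ n : ℕ, ∀ j : Fin m, j < i → (i : ℕ) - (j : ℕ) ≤ n →
        (a i j).degree < (a i i).degree from H ((i : ℕ) - (j : ℕ)) j hj0 le_rfl
    intro n
    induction n with
    | zero => intro j hj hle; omega
    | succ n ih =>
      intro j hj _hle
      by_cases hz : a i j = 0
      · rw [hz, degree_zero]
        exact Ne.bot_lt (hadegbot i)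
      · have hB : (⊥ : WithBot ℕ) < (a i i).degree + (h j j).degree := by
          refine Ne.bot_lt ?_
          exact WithBot.add_ne_bot.mpr ⟨hadegbot i, hhdegbot j⟩
        have hsum : (a i j * h j j).degree < (a i i).degree + (h j j).degree := by
          rw [harec i j hj, degree_neg]
          refine lt_of_le_of_lt (degree_sum_le _ _) ?_
          rw [Finset.sup_lt_iff hB]
          intro δ hδ
          rw [Finset.mem_Ioc] at hδ
          refine lt_of_le_of_lt (degree_mul_le _ _) ?_
          rcases eq_or_lt_of_le hδ.2 with heq | hlt
          · rw [heq]
            exact WithBot.add_lt_add_left (hadegbot i) (hred i j hj)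
          · have h1 : (a i δ).degree < (a i i).degree := by
              refine ih δ hlt ?_
              have := hδ.1
              omega
            rcases eq_or_ne (a i δ).degree ⊥ with h0 | h0
            · rw [h0, WithBot.bot_add]; exact hB
            · exact WithBot.add_lt_add_of_le_of_lt h0 h1.le
                (hred δ j hδ.1)
        rw [degree_mul] at hsum
        exact lt_of_add_lt_add_right hsum
end

section
/- Let {g_1,…,g_m} be the reduced POT Gröbner basis of C̄ for a GQC code C of dimension k, with x_i := l_i − deg g_{ii} − 1. Then the k×n matrix whose rows are the codewords corresponding to t^δ g_i for 0 ≤ δ ≤ x_i and 1 ≤ i ≤ m (interpreted in M) has linearly independent rows and is a generator matrix of C. -/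
open Polynomial

/-- The codeword in `F_q^n` (`n = ∑ l i`, coordinates `Σ i, Fin (l i)`) corresponding to a
polynomial vector, by coefficient expansion of the reduction modulo `t^{l i} − 1`. -/
noncomputable def toWord {F : Type*} [Field F] {m : ℕ} (l : Fin m → ℕ)
    (c : Fin m → Polynomial F) : (Σ i : Fin m, Fin (l i)) → F :=
  fun s => ((c s.1) %ₘ (Polynomial.X ^ (l s.1) - 1)).coeff (s.2 : ℕ)

section Aux

variable {F : Type*} [Field F] {m : ℕ} (l : Fin m → ℕ)

noncomputable def toWordL : (Fin m → Polynomial F) →ₗ[F] ((Σ i : Fin m, Fin (l i)) → F) where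
  toFun := toWord l
  map_add' c d := by
    funext s
    simp [toWord, Polynomial.add_modByMonic]
  map_smul' a c := by
    funext s
    simp [toWord, Polynomial.smul_modByMonic]

@[simp] theorem toWordL_apply (c : Fin m → Polynomial F) : toWordL l c = toWord l c := rfl

theorem monicM (hl : ∀ i, 0 < l i) (i : Fin m) : ((X : Polynomial F) ^ (l i) - 1).Monic := by
  simpa using Polynomial.monic_X_pow_sub_C (1 : F) (hl i).ne'

theorem degM (hl : ∀ i, 0 < l i) (i : Fin m) :
    ((X : Polynomial F) ^ (l i) - 1).degree = (l i : ℕ) := by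
  simpa using Polynomial.degree_X_pow_sub_C (hl i) (1 : F)

theorem natDegM (i : Fin m) : ((X : Polynomial F) ^ (l i) - 1).natDegree = l i := by
  simpa using (Polynomial.natDegree_X_pow_sub_C (n := l i) (r := (1 : F)))

theorem toWord_eq_zero_iff (hl : ∀ i, 0 < l i) (c : Fin m → Polynomial F) :
    toWord l c = 0 ↔ ∀ i, ((X : Polynomial F) ^ (l i) - 1) ∣ c i := by
  constructor
  · intro h i
    rw [← Polynomial.modByMonic_eq_zero_iff_dvd (monicM l hl i)]
    ext k
    rcases lt_or_ge k (l i) with hk | hk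
    · exact congrFun h ⟨i, ⟨k, hk⟩⟩
    · refine Polynomial.coeff_eq_zero_of_degree_lt ?_
      refine lt_of_lt_of_le (Polynomial.degree_modByMonic_lt _ (monicM l hl i)) ?_
      rw [degM l hl i]
      exact_mod_cast hk
  · intro h
    funext s
    have : c s.1 %ₘ ((X : Polynomial F) ^ (l s.1) - 1) = 0 :=
      (Polynomial.modByMonic_eq_zero_iff_dvd (monicM l hl s.1)).2 (h s.1)
    simp [toWord, this]

/-- A polynomial multiple of a generator row lies in the `F`-span of the shifted rows,
provided its degree is small enough. -/
theorem smul_row_mem_span (g : Fin m → Fin m → Polynomial F) (i : Fin m)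
    (q : Polynomial F) (hq : q.natDegree < l i - (g i i).natDegree) :
    toWord l (q • g i) ∈ Submodule.span F
      (Set.range (fun p : Σ j : Fin m, Fin (l j - (g j j).natDegree) =>
        toWord l ((X : Polynomial F) ^ (p.2 : ℕ) • g p.1))) := by
  have hrep : q • g i
      = ∑ δ ∈ Finset.range (l i - (g i i).natDegree),
          (q.coeff δ) • ((X : Polynomial F) ^ δ • g i) := by
    funext j
    simp only [Pi.smul_apply, Finset.sum_apply, smul_eq_mul, Polynomial.smul_eq_C_mul]
    conv_lhs => rw [Polynomial.as_sum_range' q _ hq]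
    rw [Finset.sum_mul]
    refine Finset.sum_congr rfl fun δ _ => ?_
    rw [← Polynomial.C_mul_X_pow_eq_monomial]
    ring
  rw [← toWordL_apply, hrep, map_sum]
  refine Submodule.sum_mem _ fun δ hδ => ?_
  rw [map_smul]
  refine Submodule.smul_mem _ _ (Submodule.subset_span ?_)
  exact ⟨⟨i, ⟨δ, Finset.mem_range.1 hδ⟩⟩, rfl⟩

end Aux

/-- Main span lemma: every codeword's word lies in the span of the rows. -/
theorem word_mem_span {F : Type*} [Field F] {m : ℕ} (l : Fin m → ℕ)
    (hl : ∀ i, 0 < l i)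
    (C : Submodule (Polynomial F) (Fin m → Polynomial F))
    (hX : ∀ i, stdGen l i ∈ C)
    (g : Fin m → Fin m → Polynomial F)
    (hmem : ∀ i, g i ∈ C)
    (htri : ∀ i j, j < i → g i j = 0)
    (hmonic : ∀ i, (g i i).Monic)
    (hmin : ∀ i, ∀ c ∈ C, (∀ j, j < i → c j = 0) → c i ≠ 0 →
      (g i i).degree ≤ (c i).degree)
    (c : Fin m → Polynomial F) (hc : c ∈ C) :
    toWord l c ∈ Submodule.span F
      (Set.range (fun p : Σ j : Fin m, Fin (l j - (g j j).natDegree) =>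
        toWord l ((X : Polynomial F) ^ (p.2 : ℕ) • g p.1))) := by
  set S := Submodule.span F
      (Set.range (fun p : Σ j : Fin m, Fin (l j - (g j j).natDegree) =>
        toWord l ((X : Polynomial F) ^ (p.2 : ℕ) • g p.1))) with hS
  have main : ∀ d i : ℕ, m ≤ i + d → ∀ c, c ∈ C →
      (∀ j : Fin m, (j : ℕ) < i → c j = 0) → toWord l c ∈ S := by
    intro d
    induction d with
    | zero =>
      intro i hi c hc hz
      have hc0 : c = 0 := funext fun j => hz j (lt_of_lt_of_le j.isLt (by omega))
      rw [hc0, ← toWordL_apply, map_zero]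
      exact Submodule.zero_mem _
    | succ d ih =>
      intro i hi c hc hz
      by_cases him : m ≤ i + d
      · exact ih i him c hc hz
      have hiltm : i < m := by omega
      set i' : Fin m := ⟨i, hiltm⟩ with hi'
      -- step 1: reduce the i-th component mod X^{l i} - 1
      set c1 : Fin m → Polynomial F :=
        c - ((c i') /ₘ ((X : Polynomial F) ^ (l i') - 1)) • stdGen l i' with hc1def
      have hc1 : c1 ∈ C := C.sub_mem hc (C.smul_mem _ (hX i'))
      have hc1i : c1 i' = c i' %ₘ ((X : Polynomial F) ^ (l i') - 1) := by
        have h := Polynomial.modByMonic_add_div (c i') ((X : Polynomial F) ^ (l i') - 1)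
        simp only [hc1def, Pi.sub_apply, Pi.smul_apply, stdGen, eq_self_iff_true, if_true,
          smul_eq_mul]
        linear_combination -h
      have hc1z : ∀ j : Fin m, (j : ℕ) < i → c1 j = 0 := by
        intro j hj
        have hne : j ≠ i' := by
          intro h; rw [h] at hj; simp [hi'] at hj
        simp [hc1def, stdGen, hne, hz j hj]
      have hword1 : toWord l c1 = toWord l c := by
        rw [← toWordL_apply, ← toWordL_apply, hc1def, map_sub, sub_eq_self, toWordL_apply]
        rw [toWord_eq_zero_iff l hl]
        intro j
        by_cases hji : j = i'
        · subst hji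
          simp only [Pi.smul_apply, stdGen, if_pos rfl, smul_eq_mul]
          exact Dvd.intro_left _ rfl
        · simp [stdGen, hji]
      -- step 2: divide by g i' i'
      by_cases hzero1 : c1 i' = 0
      · rw [← hword1]
        refine ih (i + 1) (by omega) c1 hc1 fun j hj => ?_
        rcases lt_or_eq_of_le (Nat.lt_succ_iff.1 hj) with h | h
        · exact hc1z j h
        · have : j = i' := Fin.ext h
          rw [this]; exact hzero1
      · set q2 := (c1 i') /ₘ (g i' i') with hq2def
        set c2 : Fin m → Polynomial F := c1 - q2 • g i' with hc2def
        have hc2 : c2 ∈ C := C.sub_mem hc1 (C.smul_mem _ (hmem i'))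
        have hc2z : ∀ j : Fin m, (j : ℕ) < i → c2 j = 0 := by
          intro j hj
          have : g i' j = 0 := htri i' j (by exact hj)
          simp [hc2def, this, hc1z j hj]
        have hc2i : c2 i' = c1 i' %ₘ g i' i' := by
          have h := Polynomial.modByMonic_add_div (c1 i') (g i' i')
          simp only [hc2def, Pi.sub_apply, Pi.smul_apply, smul_eq_mul]
          linear_combination -h
        have hr0 : c2 i' = 0 := by
          by_contra hr
          have h1 := hmin i' c2 hc2 (fun j hj => hc2z j hj) hr
          have h2 : (c2 i').degree < (g i' i').degree := by
            rw [hc2i]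
            exact Polynomial.degree_modByMonic_lt _ (hmonic i')
          exact absurd h1 (not_le_of_gt h2)
        have hc2word : toWord l c2 ∈ S := by
          refine ih (i + 1) (by omega) c2 hc2 fun j hj => ?_
          rcases lt_or_eq_of_le (Nat.lt_succ_iff.1 hj) with h | h
          · exact hc2z j h
          · have : j = i' := Fin.ext h
            rw [this]; exact hr0
        have hqword : toWord l (q2 • g i') ∈ S := by
          by_cases hq0 : q2 = 0
          · rw [hq0]
            have : (0 : Polynomial F) • g i' = 0 := zero_smul _ _
            rw [this, ← toWordL_apply, map_zero]
            exact Submodule.zero_mem _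
          · refine smul_row_mem_span l g i' q2 ?_
            -- degree bound
            have hgne : g i' i' ≠ 0 := (hmonic i').ne_zero
            have hprod : q2 * g i' i' = c1 i' := by
              have h := Polynomial.modByMonic_add_div (c1 i') (g i' i')
              rw [hc2i] at hr0
              rw [hr0] at h
              linear_combination h
            have hprodne : q2 * g i' i' ≠ 0 := mul_ne_zero hq0 hgne
            have hdegc1 : (c1 i').degree < ((l i' : ℕ) : WithBot ℕ) := by
              rw [hc1i]
              refine lt_of_lt_of_le (Polynomial.degree_modByMonic_lt _ (monicM l hl i')) ?_
              rw [degM l hl i']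
            have hnat : (c1 i').natDegree < l i' := by
              rw [← hprod] at hdegc1 ⊢
              exact (Polynomial.natDegree_lt_iff_degree_lt hprodne).2 hdegc1
            have hmul : q2.natDegree + (g i' i').natDegree = (c1 i').natDegree := by
              rw [← hprod, Polynomial.natDegree_mul hq0 hgne]
            omega
        rw [← hword1]
        have : c1 = c2 + q2 • g i' := by rw [hc2def]; ring
        rw [this, ← toWordL_apply, map_add]
        exact Submodule.add_mem _ hc2word hqword
  exact main m 0 (by omega) c hc (fun j hj => absurd hj (Nat.not_lt_zero _))

/-- Linear independence of the rows. -/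
theorem rows_linearIndependent {F : Type*} [Field F] {m : ℕ} (l : Fin m → ℕ)
    (hl : ∀ i, 0 < l i)
    (g : Fin m → Fin m → Polynomial F)
    (htri : ∀ i j, j < i → g i j = 0)
    (hmonic : ∀ i, (g i i).Monic)
    (hdvd : ∀ i, g i i ∣ (X : Polynomial F) ^ (l i) - 1) :
    LinearIndependent F
      (fun p : Σ i : Fin m, Fin (l i - (g i i).natDegree) =>
        toWord l ((X : Polynomial F) ^ (p.2 : ℕ) • g p.1)) := by
  rw [Fintype.linearIndependent_iff]
  intro a ha
  set q : Fin m → Polynomial F := fun i =>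
    ∑ δ : Fin (l i - (g i i).natDegree), Polynomial.C (a ⟨i, δ⟩) * X ^ (δ : ℕ) with hqdef
  have hdle : ∀ i, (g i i).natDegree ≤ l i := by
    intro i
    have := Polynomial.natDegree_le_of_dvd (hdvd i) (monicM l hl i).ne_zero
    rwa [natDegM] at this
  have hqdeg : ∀ i, (q i).degree < ((l i - (g i i).natDegree : ℕ) : WithBot ℕ) := by
    intro i
    refine lt_of_le_of_lt (Polynomial.degree_sum_le _ _) ?_
    rw [Finset.sup_lt_iff (by exact_mod_cast WithBot.bot_lt_coe _)]
    intro δ _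
    exact lt_of_le_of_lt (Polynomial.degree_C_mul_X_pow_le _ _) (by exact_mod_cast δ.isLt)
  have hvec : (∑ i, q i • g i)
      = ∑ p : Σ i : Fin m, Fin (l i - (g i i).natDegree),
          a p • ((X : Polynomial F) ^ (p.2 : ℕ) • g p.1) := by
    rw [← Finset.univ_sigma_univ, Finset.sum_sigma]
    refine Finset.sum_congr rfl fun i _ => ?_
    funext j
    simp only [Pi.smul_apply, Finset.sum_apply, smul_eq_mul, Polynomial.smul_eq_C_mul, hqdef,
      Finset.sum_mul]
    refine Finset.sum_congr rfl fun δ _ => by ring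
  have hz : toWord l (∑ i, q i • g i) = 0 := by
    rw [← toWordL_apply, hvec, map_sum]
    simp only [map_smul, toWordL_apply]
    exact ha
  have hdvdall := (toWord_eq_zero_iff l hl _).1 hz
  have hq0 : ∀ n : ℕ, ∀ i : Fin m, (i : ℕ) = n → q i = 0 := by
    intro n
    induction n using Nat.strong_induction_on with
    | _ n ih =>
      intro i hin
      by_contra hqi
      have hcomp : (∑ i', q i' • g i') i = q i * g i i := by
        rw [Finset.sum_apply]
        rw [Finset.sum_eq_single i]
        · simp [smul_eq_mul]
        · intro j _ hji
          rcases lt_or_gt_of_ne hji with h | h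
          · have hlt : (j : ℕ) < n := by rw [← hin]; exact h
            rw [Pi.smul_apply, ih (j : ℕ) hlt j rfl]
            simp
          · rw [Pi.smul_apply, htri j i h]
            simp
        · intro h; exact absurd (Finset.mem_univ i) h
      have hdvdi := hdvdall i
      rw [hcomp] at hdvdi
      have hgne : g i i ≠ 0 := (hmonic i).ne_zero
      have hne : q i * g i i ≠ 0 := mul_ne_zero hqi hgne
      have hle := Polynomial.natDegree_le_of_dvd hdvdi hne
      rw [natDegM] at hle
      have hqnat : (q i).natDegree < l i - (g i i).natDegree :=
        (Polynomial.natDegree_lt_iff_degree_lt hqi).2 (hqdeg i)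
      have hmul := Polynomial.natDegree_mul hqi hgne
      have hd := hdle i
      omega
  intro p
  obtain ⟨i, δ⟩ := p
  have h0 := hq0 (i : ℕ) i rfl
  have hco := congrArg (fun r => Polynomial.coeff r (δ : ℕ)) h0
  simp only [hqdef, Polynomial.finset_sum_coeff, Polynomial.coeff_C_mul,
    Polynomial.coeff_X_pow, Polynomial.coeff_zero, mul_ite, mul_one, mul_zero] at hco
  rw [Finset.sum_eq_single δ] at hco
  · simpa using hco
  · intro δ' _ hne
    rw [if_neg (fun h : (δ : ℕ) = (δ' : ℕ) => hne (Fin.ext h.symm))]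
  · intro h; exact absurd (Finset.mem_univ δ) h

/-- for the reduced POT Gröbner basis `{g_i}` of `C̄`, the `k` codewords
corresponding to `t^δ·g_i` for `0 ≤ δ ≤ x_i = l_i − deg g_{ii} − 1` are linearly independent
over `F_q` and span exactly the code `C`; i.e. they form a generator matrix of `C`. -/
theorem stmt15 (F : Type*) [Field F] [Fintype F] (m : ℕ) (l : Fin m → ℕ)
    (hl : ∀ i, 0 < l i)
    (C : Submodule (Polynomial F) (Fin m → Polynomial F))
    (hX : ∀ i, stdGen l i ∈ C)
    (g : Fin m → Fin m → Polynomial F)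
    (hmem : ∀ i, g i ∈ C)
    (htri : ∀ i j, j < i → g i j = 0)
    (hmonic : ∀ i, (g i i).Monic)
    (hdvd : ∀ i, g i i ∣ (X : Polynomial F) ^ (l i) - 1)
    (hmin : ∀ i, ∀ c ∈ C, (∀ j, j < i → c j = 0) → c i ≠ 0 →
      (g i i).degree ≤ (c i).degree)
    (hred : ∀ i j, i < j → (g i j).degree < (g j j).degree) :
    LinearIndependent F
      (fun p : Σ i : Fin m, Fin (l i - (g i i).natDegree) =>
        toWord l ((X : Polynomial F) ^ (p.2 : ℕ) • g p.1)) ∧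
    (Submodule.span F
        (Set.range (fun p : Σ i : Fin m, Fin (l i - (g i i).natDegree) =>
          toWord l ((X : Polynomial F) ^ (p.2 : ℕ) • g p.1))) :
        Set ((Σ i : Fin m, Fin (l i)) → F))
      = {v | ∃ c ∈ C, toWord l c = v} := by
  constructor
  · exact rows_linearIndependent l hl g htri hmonic hdvd
  · ext v
    simp only [SetLike.mem_coe, Set.mem_setOf_eq]
    constructor
    · intro hv
      have hle : Submodule.span F
            (Set.range (fun p : Σ i : Fin m, Fin (l i - (g i i).natDegree) =>
              toWord l ((X : Polynomial F) ^ (p.2 : ℕ) • g p.1)))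
          ≤ Submodule.map (toWordL l) (C.restrictScalars F) := by
        rw [Submodule.span_le]
        rintro _ ⟨p, rfl⟩
        exact ⟨(X : Polynomial F) ^ (p.2 : ℕ) • g p.1, C.smul_mem _ (hmem p.1), rfl⟩
      obtain ⟨c, hc, rfl⟩ := hle hv
      exact ⟨c, hc, rfl⟩
    · rintro ⟨c, hc, rfl⟩
      exact word_mem_span l hl C hX g hmem htri hmonic hmin c hc
end

section
/- If {h_1,…,h_m} is a Gröbner basis of C̄^⊥ and for fixed i the set C_i := { c_i : (0,…,0,c_i,c_{i+1},…,c_m) ∈ C } is the i-th sectional shortened code, then C_i is a cyclic code of length l_i whose dual has generator polynomial h_{ii}(t); consequently the generator polynomial of C_i is g_{ii}(t), the i-th diagonal entry of any POT Gröbner basis of C̄. -/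
open Polynomial

namespace Stmt16Aux

variable {F : Type*} [Field F] {m : ℕ}

lemma minDeg_dvd (S : Ideal (Polynomial F)) {g : Polynomial F} (hg : g ∈ S) (hg0 : g ≠ 0)
    (hmin : ∀ p ∈ S, p ≠ 0 → g.degree ≤ p.degree) {p : Polynomial F} (hp : p ∈ S) : g ∣ p := by
  have hmem : p % g ∈ S := by
    rw [EuclideanDomain.mod_eq_sub_mul_div]
    exact S.sub_mem hp (S.mul_mem_right _ hg)
  by_cases h0 : p % g = 0
  · exact EuclideanDomain.mod_eq_zero.mp h0
  · have h1 := hmin _ hmem h0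
    have h2 : (p % g).degree < g.degree := EuclideanDomain.mod_lt _ hg0
    exact absurd h2 (not_lt.mpr h1)

lemma eq_of_coeff_lt {r s : Polynomial F} {n : ℕ} (hr : r.degree < (n : ℕ))
    (hs : s.degree < (n : ℕ)) (hc : ∀ k < n, r.coeff k = s.coeff k) : r = s := by
  ext k
  by_cases hk : k < n
  · exact hc k hk
  · rw [coeff_eq_zero_of_degree_lt (lt_of_lt_of_le hr (by exact_mod_cast not_lt.mp hk)),
      coeff_eq_zero_of_degree_lt (lt_of_lt_of_le hs (by exact_mod_cast not_lt.mp hk))]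

lemma orth_inf {K V : Type*} [Field K] [AddCommGroup V] [Module K V] [FiniteDimensional K V]
    {B : LinearMap.BilinForm K V} (hB : B.Nondegenerate) (hB0 : B.IsRefl)
    (A W : Submodule K V) :
    B.orthogonal (A ⊓ W) = B.orthogonal A ⊔ B.orthogonal W := by
  have hsup : ∀ X Y : Submodule K V, B.orthogonal (X ⊔ Y) = B.orthogonal X ⊓ B.orthogonal Y := by
    intro X Y
    apply le_antisymm
    · exact le_inf (B.orthogonal_le le_sup_left) (B.orthogonal_le le_sup_right)
    · rintro z ⟨hz1, hz2⟩ n hn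
      obtain ⟨a, ha, b, hb, rfl⟩ := Submodule.mem_sup.mp hn
      have h1 := hz1 a ha
      have h2 := hz2 b hb
      rw [map_add, LinearMap.add_apply, h1, h2, add_zero]
  calc B.orthogonal (A ⊓ W)
      = B.orthogonal ((B.orthogonal (B.orthogonal A)) ⊓ (B.orthogonal (B.orthogonal W))) := by
        rw [LinearMap.BilinForm.orthogonal_orthogonal hB hB0,
          LinearMap.BilinForm.orthogonal_orthogonal hB hB0]
    _ = B.orthogonal (B.orthogonal (B.orthogonal A ⊔ B.orthogonal W)) := by rw [hsup]
    _ = B.orthogonal A ⊔ B.orthogonal W :=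
        LinearMap.BilinForm.orthogonal_orthogonal hB hB0 _

noncomputable def red (l : Fin m → ℕ) :
    (Fin m → Polynomial F) →ₗ[F] (Π j : Fin m, Fin (l j) → F) where
  toFun c := fun j k => ((c j) %ₘ (X ^ (l j) - 1)).coeff k
  map_add' c d := by funext j k; simp [add_modByMonic]
  map_smul' a c := by funext j k; simp [Polynomial.smul_modByMonic]

lemma red_apply (l : Fin m → ℕ) (c : Fin m → Polynomial F) (j : Fin m) (k : Fin (l j)) :
    red l c j k = ((c j) %ₘ (X ^ (l j) - 1)).coeff k := rfl

lemma monic_f (n : ℕ) (hn : 0 < n) : ((X : Polynomial F) ^ n - 1).Monic := by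
  simpa using monic_X_pow_sub_C (1 : F) hn.ne'

lemma degree_f (n : ℕ) (hn : 0 < n) : ((X : Polynomial F) ^ n - 1).degree = n := by
  simpa using degree_X_pow_sub_C hn (1 : F)

lemma degree_mod_f_lt (p : Polynomial F) (n : ℕ) (hn : 0 < n) :
    (p %ₘ ((X : Polynomial F) ^ n - 1)).degree < (n : ℕ) := by
  have := degree_modByMonic_lt p (monic_f n hn (F := F))
  rwa [degree_f n hn] at this

noncomputable def Bf (l : Fin m → ℕ) :
    LinearMap.BilinForm F (Π j : Fin m, Fin (l j) → F) :=
  LinearMap.mk₂ F (fun x y => ∑ j, ∑ k, x j k * y j k)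
    (by intros x x' y; simp [add_mul, Finset.sum_add_distrib])
    (by intros a x y; simp [Finset.mul_sum, mul_assoc])
    (by intros x y y'; simp [mul_add, Finset.sum_add_distrib])
    (by intros a x y; simp only [Pi.smul_apply, smul_eq_mul, Finset.mul_sum]
        exact Finset.sum_congr rfl fun j _ => Finset.sum_congr rfl fun k _ => by ring)

lemma Bf_apply (l : Fin m → ℕ) (x y : Π j : Fin m, Fin (l j) → F) :
    Bf l x y = ∑ j, ∑ k, x j k * y j k := rfl

lemma Bf_comm (l : Fin m → ℕ) (x y : Π j : Fin m, Fin (l j) → F) :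
    Bf l x y = Bf l y x := by
  rw [Bf_apply, Bf_apply]
  exact Finset.sum_congr rfl fun j _ => Finset.sum_congr rfl fun k _ => mul_comm _ _

lemma Bf_refl (l : Fin m → ℕ) : (Bf l (F := F)).IsRefl := by
  intro x y hxy
  rw [← Bf_comm]; exact hxy

lemma Bf_single (l : Fin m → ℕ) (x : Π j : Fin m, Fin (l j) → F) (j : Fin m) (k : Fin (l j)) :
    Bf l x (Pi.single j (Pi.single k 1)) = x j k := by
  rw [Bf_apply, Finset.sum_eq_single j]
  · rw [Finset.sum_eq_single k]
    · simp
    · intro b _ hb; simp [Pi.single_apply, hb]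
    · simp
  · intro b _ hb
    apply Finset.sum_eq_zero
    intro k' _
    rw [Pi.single_eq_of_ne hb]
    simp
  · simp

lemma Bf_nondeg (l : Fin m → ℕ) : (Bf l (F := F)).Nondegenerate := by
  refine ⟨fun x hx => ?_, fun x hx => ?_⟩
  · funext j k
    have := hx (Pi.single j (Pi.single k 1))
    rw [Bf_single] at this
    simpa using this
  · funext j k
    have := hx (Pi.single j (Pi.single k 1))
    rw [Bf_comm, Bf_single] at this
    simpa using this

lemma pairing_eq (l : Fin m → ℕ) (u v : Fin m → Polynomial F) :
    pairing l u v = Bf l (red l u) (red l v) := by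
  rw [Bf_apply]
  unfold pairing
  refine Finset.sum_congr rfl fun j _ => ?_
  rw [← Fin.sum_univ_eq_sum_range]
  rfl

noncomputable def liftpoly {N : ℕ} (y : Fin N → F) : Polynomial F :=
  ∑ k : Fin N, monomial (k : ℕ) (y k)

lemma liftpoly_coeff {N : ℕ} (y : Fin N → F) (t : ℕ) :
    (liftpoly y).coeff t = if ht : t < N then y ⟨t, ht⟩ else 0 := by
  unfold liftpoly
  rw [finset_sum_coeff]
  by_cases ht : t < N
  · rw [dif_pos ht, Finset.sum_eq_single (⟨t, ht⟩ : Fin N)]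
    · simp [coeff_monomial]
    · intro b _ hb
      rw [coeff_monomial, if_neg]
      intro hc
      exact hb (Fin.ext hc)
    · simp
  · rw [dif_neg ht]
    apply Finset.sum_eq_zero
    intro k _
    rw [coeff_monomial, if_neg]
    intro hc
    exact ht (hc ▸ k.isLt)

lemma liftpoly_degree {N : ℕ} (y : Fin N → F) : (liftpoly y).degree < (N : ℕ) := by
  rw [degree_lt_iff_coeff_zero]
  intro t ht
  rw [liftpoly_coeff, dif_neg (by omega)]

/-- The sectional ideal associated to a submodule and a vanishing condition. -/
noncomputable def secIdeal (E : Submodule (Polynomial F) (Fin m → Polynomial F))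
    (P : Fin m → Prop) (i : Fin m) : Ideal (Polynomial F) where
  carrier := {p | ∃ c ∈ E, (∀ k, P k → c k = 0) ∧ c i = p}
  add_mem' := by
    rintro a b ⟨c, hc, hz, rfl⟩ ⟨d, hd, hz', rfl⟩
    exact ⟨c + d, E.add_mem hc hd, fun k hk => by simp [hz k hk, hz' k hk], rfl⟩
  zero_mem' := ⟨0, E.zero_mem, fun k _ => rfl, rfl⟩
  smul_mem' := by
    rintro r p ⟨c, hc, hz, rfl⟩
    exact ⟨r • c, E.smul_mem r hc, fun k hk => by simp [hz k hk], by simp⟩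

lemma mem_secIdeal {E : Submodule (Polynomial F) (Fin m → Polynomial F)}
    {P : Fin m → Prop} {i : Fin m} {p : Polynomial F} :
    p ∈ secIdeal E P i ↔ ∃ c ∈ E, (∀ k, P k → c k = 0) ∧ c i = p := Iff.rfl

end Stmt16Aux

open Stmt16Aux

/-- the `i`-th sectional shortened code
`C_i = { c_i : (0,…,0,c_i,…,c_m) ∈ C̄ }` is the cyclic code of length `l_i` with generator
polynomial `g_{ii}` (the diagonal entry of any POT Gröbner basis of `C̄`), and its dual is the
cyclic code with generator polynomial `h_{ii}` (the diagonal entry of the rPOT Gröbner basis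
of `C̄^⊥`). -/
theorem stmt16 (F : Type*) [Field F] [Fintype F] (m : ℕ) (l : Fin m → ℕ)
    (hl : ∀ i, 0 < l i)
    (C D : Submodule (Polynomial F) (Fin m → Polynomial F))
    (hXC : ∀ i, stdGen l i ∈ C)
    (hD : ∀ v : Fin m → Polynomial F, v ∈ D ↔ ∀ u ∈ C, pairing l u v = 0)
    (h : Fin m → Fin m → Polynomial F)
    (hhmem : ∀ i, h i ∈ D)
    (hhtri : ∀ i j : Fin m, i < j → h i j = 0)
    (hhne : ∀ i, h i i ≠ 0)
    (hhmin : ∀ i, ∀ v ∈ D, (∀ k, i < k → v k = 0) → v i ≠ 0 →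
      (h i i).degree ≤ (v i).degree)
    (g : Fin m → Fin m → Polynomial F)
    (hgmem : ∀ i, g i ∈ C)
    (hgtri : ∀ i j : Fin m, j < i → g i j = 0)
    (hgne : ∀ i, g i i ≠ 0)
    (hgmin : ∀ i, ∀ c ∈ C, (∀ j, j < i → c j = 0) → c i ≠ 0 →
      (g i i).degree ≤ (c i).degree)
    (i : Fin m) :
    (∀ p : Polynomial F,
      (∃ c ∈ C, (∀ k, k < i → c k = 0) ∧ c i = p) ↔ g i i ∣ p) ∧
    (∀ q : Polynomial F,
      h i i ∣ q ↔
        ∀ p : Polynomial F, (∃ c ∈ C, (∀ k, k < i → c k = 0) ∧ c i = p) →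
          ∑ j ∈ Finset.range (l i),
            (p %ₘ ((X : Polynomial F) ^ (l i) - 1)).coeff j *
              (q %ₘ ((X : Polynomial F) ^ (l i) - 1)).coeff j = 0) := by
  classical
  have hmon : ∀ j : Fin m, ((X : Polynomial F) ^ (l j) - 1).Monic :=
    fun j => monic_f _ (hl j)
  -- part 1
  have hgSC : g i i ∈ secIdeal C (fun k => k < i) i :=
    ⟨g i, hgmem i, fun k hk => hgtri i k hk, rfl⟩
  have hSCmin : ∀ p ∈ secIdeal C (fun k => k < i) i, p ≠ 0 → (g i i).degree ≤ p.degree := by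
    rintro p ⟨c, hc, hz, rfl⟩ hne
    exact hgmin i c hc hz hne
  have part1 : ∀ p : Polynomial F,
      (∃ c ∈ C, (∀ k, k < i → c k = 0) ∧ c i = p) ↔ g i i ∣ p := by
    intro p
    constructor
    · intro hp
      exact minDeg_dvd _ hgSC (hgne i) hSCmin (mem_secIdeal.mpr hp)
    · rintro ⟨s, rfl⟩
      exact ⟨s • g i, C.smul_mem s (hgmem i),
        fun k hk => by simp [hgtri i k hk], by simp [mul_comm]⟩
  -- the SD ideal
  have hhSD : h i i ∈ secIdeal D (fun k => i < k) i :=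
    ⟨h i, hhmem i, fun k hk => hhtri i k hk, rfl⟩
  have hSDmin : ∀ p ∈ secIdeal D (fun k => i < k) i, p ≠ 0 → (h i i).degree ≤ p.degree := by
    rintro p ⟨v, hv, hz, rfl⟩ hne
    exact hhmin i v hv hz hne
  have hSDdvd : ∀ p ∈ secIdeal D (fun k => i < k) i, h i i ∣ p :=
    fun p hp => minDeg_dvd _ hhSD (hhne i) hSDmin hp
  -- stdGen lies in D
  have hstdD : ∀ j, stdGen l j ∈ D := by
    intro j
    rw [hD]
    intro u hu
    unfold pairing
    apply Finset.sum_eq_zero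
    intro j' _
    apply Finset.sum_eq_zero
    intro k _
    rcases eq_or_ne j' j with rfl | hne
    · rw [show (stdGen l j' j' : Polynomial F) = X ^ (l j') - 1 from by simp [stdGen],
        (modByMonic_eq_zero_iff_dvd (hmon j')).mpr dvd_rfl, coeff_zero, mul_zero]
    · rw [show (stdGen l j j' : Polynomial F) = 0 from by simp [stdGen, hne],
        zero_modByMonic, coeff_zero, mul_zero]
  have hfSD : h i i ∣ (X : Polynomial F) ^ (l i) - 1 := by
    apply hSDdvd
    exact ⟨stdGen l i, hstdD i, fun k hk => by simp [stdGen, hk.ne'], by simp [stdGen]⟩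
  -- part 2 forward direction
  have part2f : ∀ q : Polynomial F, h i i ∣ q →
      ∀ p : Polynomial F, (∃ c ∈ C, (∀ k, k < i → c k = 0) ∧ c i = p) →
        ∑ j ∈ Finset.range (l i),
          (p %ₘ ((X : Polynomial F) ^ (l i) - 1)).coeff j *
            (q %ₘ ((X : Polynomial F) ^ (l i) - 1)).coeff j = 0 := by
    rintro q' ⟨s, rfl⟩ p ⟨c, hc, hz, rfl⟩
    have hvD : s • h i ∈ D := D.smul_mem s (hhmem i)
    have hp := (hD _).mp hvD c hc
    unfold pairing at hp
    rw [Finset.sum_eq_single i] at hp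
    · have he : (s • h i) i = h i i * s := by simp [mul_comm]
      rw [he] at hp
      exact hp
    · intro b _ hb
      apply Finset.sum_eq_zero; intro k _
      rcases lt_or_gt_of_ne hb with hlt | hgt
      · rw [hz b hlt, zero_modByMonic, coeff_zero, zero_mul]
      · rw [show (s • h i) b = 0 from by simp [hhtri i b hgt],
          zero_modByMonic, coeff_zero, mul_zero]
    · simp
  refine ⟨part1, fun q => ⟨part2f q, ?_⟩⟩
  -- backward direction
  intro hq
  set B := Bf (F := F) l with hB
  set ρ := red (F := F) l with hρ
  set Cbar : Submodule F (Π j : Fin m, Fin (l j) → F) := (C.restrictScalars F).map ρ with hCbar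
  set Dbar : Submodule F (Π j : Fin m, Fin (l j) → F) := (D.restrictScalars F).map ρ with hDbar
  -- vanishing of all low coefficients forces the remainder to vanish
  have hmodzero : ∀ (j : Fin m) (p : Polynomial F),
      (∀ k : Fin (l j), (p %ₘ ((X : Polynomial F) ^ (l j) - 1)).coeff (k : ℕ) = 0) →
      p %ₘ ((X : Polynomial F) ^ (l j) - 1) = 0 := by
    intro j p hk
    refine eq_of_coeff_lt (n := l j) (degree_mod_f_lt p _ (hl j)) ?_ ?_
    · rw [degree_zero]; exact WithBot.bot_lt_coe _
    · intro k hlt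
      rw [coeff_zero]
      exact hk ⟨k, hlt⟩
  -- fixing a representative: make coordinates literally vanish
  have fix : ∀ (E : Submodule (Polynomial F) (Fin m → Polynomial F)),
      (∀ j, stdGen l j ∈ E) → ∀ (P : Fin m → Prop) (c : Fin m → Polynomial F), c ∈ E →
      ∃ c' ∈ E, (∀ k, P k → c' k = c k %ₘ ((X : Polynomial F) ^ (l k) - 1)) ∧
        (∀ k, ¬ P k → c' k = c k) := by
    intro E hstd P c hc
    refine ⟨c - ∑ j ∈ Finset.univ.filter P,
        (c j /ₘ ((X : Polynomial F) ^ (l j) - 1)) • stdGen l j,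
      E.sub_mem hc (Submodule.sum_mem _ fun j _ => E.smul_mem _ (hstd j)), ?_, ?_⟩
    · intro k hk
      have hsum : (∑ j ∈ Finset.univ.filter P,
          (c j /ₘ ((X : Polynomial F) ^ (l j) - 1)) • stdGen l j) k
          = (c k /ₘ ((X : Polynomial F) ^ (l k) - 1)) * ((X : Polynomial F) ^ (l k) - 1) := by
        rw [Finset.sum_apply, Finset.sum_eq_single k]
        · simp [stdGen]
        · intro b _ hb
          simp [stdGen, Ne.symm hb]
        · intro hk'
          exact absurd (Finset.mem_filter.mpr ⟨Finset.mem_univ _, hk⟩) hk'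
      rw [Pi.sub_apply, hsum, modByMonic_eq_sub_mul_div _ _]
      ring
    · intro k hk
      rw [Pi.sub_apply, Finset.sum_apply, Finset.sum_eq_zero, sub_zero]
      intro b hb
      have hbk : k ≠ b := fun e => hk (e ▸ (Finset.mem_filter.mp hb).2)
      simp [stdGen, hbk]
  -- Dbar is the orthogonal of Cbar
  have hDorth : Dbar = B.orthogonal Cbar := by
    apply le_antisymm
    · rintro _ ⟨v, hv, rfl⟩ x hx
      obtain ⟨u, hu, rfl⟩ := hx
      have hpv := (hD v).mp hv u hu
      rw [pairing_eq] at hpv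
      exact hpv
    · intro y hy
      have hred : ρ (fun j => liftpoly (y j)) = y := by
        funext j k
        rw [hρ, red_apply, (modByMonic_eq_self_iff (hmon j)).mpr ?_]
        · rw [liftpoly_coeff, dif_pos k.isLt]
        · rw [degree_f _ (hl j)]
          exact liftpoly_degree _
      refine ⟨fun j => liftpoly (y j), ?_, hred⟩
      show (fun j => liftpoly (y j)) ∈ D
      rw [hD]
      intro u hu
      rw [pairing_eq, show red l (fun j => liftpoly (y j)) = y from hred]
      exact hy (ρ u) ⟨u, hu, rfl⟩
  -- the subspace of vectors vanishing below i
  set W : Submodule F (Π j : Fin m, Fin (l j) → F) :=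
    { carrier := {x | ∀ j, j < i → x j = 0}
      add_mem' := fun {a b} ha hb j hj => by
        rw [Pi.add_apply, ha j hj, hb j hj, add_zero]
      zero_mem' := fun j _ => rfl
      smul_mem' := fun a x hx j hj => by
        rw [Pi.smul_apply, hx j hj, smul_zero] } with hW
  -- the target vector
  set yq : Π j : Fin m, Fin (l j) → F :=
    Pi.single i (fun k : Fin (l i) => (q %ₘ ((X : Polynomial F) ^ (l i) - 1)).coeff (k : ℕ))
    with hyq
  -- yq is orthogonal to Cbar ⊓ W
  have hyorth : yq ∈ B.orthogonal (Cbar ⊓ W) := by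
    intro x hx
    obtain ⟨hx1, hx2⟩ := Submodule.mem_inf.mp hx
    obtain ⟨c, hc, rfl⟩ := hx1
    obtain ⟨c', hc', hlt, hge⟩ := fix C hXC (fun k => k < i) c hc
    have hz : ∀ k, k < i → c' k = 0 := by
      intro k hk
      rw [hlt k hk]
      apply hmodzero
      intro k'
      have h2 : ρ c k = 0 := hx2 k hk
      have := congrFun h2 k'
      rwa [hρ, red_apply] at this
    have hredeq : ρ c' = ρ c := by
      funext j k
      rcases lt_or_ge j i with hj | hj
      · have h2 : ρ c j = 0 := hx2 j hj
        rw [hρ, red_apply, hz j hj, zero_modByMonic, coeff_zero]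
        exact (congrFun h2 k).symm
      · rw [hρ, red_apply, red_apply, hge j (not_lt.mpr hj)]
    show B (ρ c) yq = 0
    rw [← hredeq]
    have hsum : B (ρ c') yq = ∑ k ∈ Finset.range (l i),
        (c' i %ₘ ((X : Polynomial F) ^ (l i) - 1)).coeff k *
          (q %ₘ ((X : Polynomial F) ^ (l i) - 1)).coeff k := by
      rw [hB, Bf_apply, Finset.sum_eq_single i]
      · rw [← Fin.sum_univ_eq_sum_range]
        refine Finset.sum_congr rfl fun k _ => ?_
        rw [hρ, red_apply]
        congr 1
        rw [hyq, Pi.single_eq_same]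
      · intro b _ hb
        apply Finset.sum_eq_zero
        intro k _
        rw [hyq, Pi.single_eq_of_ne hb]
        simp
      · simp
    rw [hsum]
    exact hq (c' i) ⟨c', hc', hz, rfl⟩
  -- decompose
  have hdec : yq ∈ Dbar ⊔ B.orthogonal W := by
    rw [hDorth, ← orth_inf (Bf_nondeg l) (Bf_refl l) Cbar W]
    exact hyorth
  obtain ⟨d, hd, w, hw, hdw⟩ := Submodule.mem_sup.mp hdec
  obtain ⟨v, hvD, rfl⟩ := hd
  have hw0 : ∀ j, i ≤ j → w j = 0 := by
    intro j hj
    funext k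
    have hWm : (Pi.single j (Pi.single k (1 : F)) : Π j', Fin (l j') → F) ∈ W := by
      intro j' hj'
      refine Pi.single_eq_of_ne ?_ _
      intro e
      subst e
      exact absurd hj' (not_lt.mpr hj)
    have h1 := hw _ hWm
    have h2 : B w (Pi.single j (Pi.single k (1 : F))) = 0 := by
      rw [hB, Bf_comm]
      exact h1
    rw [hB, Bf_single] at h2
    simpa using h2
  have hvx : ρ v = yq - w := eq_sub_of_add_eq hdw
  -- v vanishes mod f above i
  have hvj : ∀ j, i < j → ∀ k : Fin (l j),
      (v j %ₘ ((X : Polynomial F) ^ (l j) - 1)).coeff (k : ℕ) = 0 := by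
    intro j hj k
    have : ρ v j = 0 := by
      rw [hvx, Pi.sub_apply, hyq, Pi.single_eq_of_ne hj.ne', hw0 j hj.le, sub_zero]
    have := congrFun this k
    rwa [hρ, red_apply] at this
  obtain ⟨v', hv'D, hv'gt, hv'le⟩ := fix D hstdD (fun k => i < k) v hvD
  have hv'z : ∀ k, i < k → v' k = 0 := by
    intro k hk
    rw [hv'gt k hk]
    exact hmodzero k (v k) (hvj k hk)
  have hvi : h i i ∣ v i := by
    apply hSDdvd
    exact ⟨v', hv'D, hv'z, hv'le i (lt_irrefl i)⟩
  -- v i agrees with q mod f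
  have heq : v i %ₘ ((X : Polynomial F) ^ (l i) - 1)
      = q %ₘ ((X : Polynomial F) ^ (l i) - 1) := by
    apply eq_of_coeff_lt (n := l i) (degree_mod_f_lt _ _ (hl i)) (degree_mod_f_lt _ _ (hl i))
    intro k hk
    have : ρ v i = fun k : Fin (l i) => (q %ₘ ((X : Polynomial F) ^ (l i) - 1)).coeff (k : ℕ) := by
      rw [hvx, Pi.sub_apply, hyq, Pi.single_eq_same, hw0 i le_rfl, sub_zero]
    have := congrFun this ⟨k, hk⟩
    rwa [hρ, red_apply] at this
  have hfd : ((X : Polynomial F) ^ (l i) - 1) ∣ (q - v i) := by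
    have e1 := modByMonic_eq_sub_mul_div q ((X : Polynomial F) ^ (l i) - 1)
    have e2 := modByMonic_eq_sub_mul_div (v i) ((X : Polynomial F) ^ (l i) - 1)
    refine ⟨q /ₘ ((X : Polynomial F) ^ (l i) - 1) - (v i) /ₘ ((X : Polynomial F) ^ (l i) - 1), ?_⟩
    rw [mul_sub]
    linear_combination e2 - e1 - heq
  have := dvd_add (dvd_trans hfSD hfd) hvi
  rwa [sub_add_cancel] at this
end
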